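/- Let T be an ℕ-valued random variable, and for each k ≥ 0 let S_k be an event independent of {T = t-k} for all t, with P(S_k) < ρ, and let (Z_k)_{k≥0} be random variables with 0 ≤ Z_k ≤ M a.s. and {Z_k > τ/2} ⊆ S_k. Then for every t ≥ 0, Σ_{k=0}^{t} E[Z_k · 1_{T = t-k}] ≤ (τ/2 + M ρ) · P(T ≤ t). -/

import Mathlib

open MeasureTheory

theorem stmt_4 {Ω : Type*} [MeasurableSpace Ω] (μ : Measure Ω) [IsProbabilityMeasure μ]
    (T : Ω → ℕ) (hTmeas : Measurable T)
    (S : ℕ → Set Ω) (hSmeas : ∀ k, MeasurableSet (S k))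
    (Z : ℕ → Ω → ℝ) (hZmeas : ∀ k, Measurable (Z k))
    (M τ ρ : ℝ) (hM : 0 < M) (hτ : 0 < τ) (hρ : 0 < ρ)
    (hindep : ∀ k m : ℕ, μ (S k ∩ {ω | T ω = m}) = μ (S k) * μ {ω | T ω = m})
    (hS : ∀ k, μ (S k) < ENNReal.ofReal ρ)
    (hZbdd : ∀ᵐ ω ∂μ, ∀ k, 0 ≤ Z k ω ∧ Z k ω ≤ M)
    (hZS : ∀ k, {ω | Z k ω > τ / 2} ⊆ S k) :
    ∀ t : ℕ,
      ∑ k ∈ Finset.range (t + 1),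
          ∫ ω, ({ω | T ω = t - k}.indicator (fun _ => (1 : ℝ)) ω) * Z k ω ∂μ
        ≤ (τ / 2 + M * ρ) * (μ {ω | T ω ≤ t}).toReal := by
  intro t
  have hTm : ∀ m : ℕ, MeasurableSet {ω | T ω = m} := fun m =>
    hTmeas (MeasurableSet.singleton m)
  -- per-term bound
  have key : ∀ k m : ℕ,
      ∫ ω, ({ω | T ω = m}.indicator (fun _ => (1 : ℝ)) ω) * Z k ω ∂μ
        ≤ (τ / 2 + M * ρ) * (μ {ω | T ω = m}).toReal := by
    intro k m
    set A : Set Ω := {ω | T ω = m} with hA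
    set B : Set Ω := S k ∩ A with hB
    have hAmeas := hTm m
    have hBmeas : MeasurableSet B := (hSmeas k).inter hAmeas
    set g : Ω → ℝ := fun ω => (τ / 2) * A.indicator (fun _ => (1:ℝ)) ω
        + M * B.indicator (fun _ => (1:ℝ)) ω with hg
    have hgint : Integrable g μ := by
      apply Integrable.add
      · exact ((integrable_indicator_iff hAmeas).2
          (integrableOn_const (measure_ne_top μ A))).const_mul _
      · exact ((integrable_indicator_iff hBmeas).2
          (integrableOn_const (measure_ne_top μ B))).const_mul _
    have hbound : ∀ᵐ ω ∂μ,
        ({ω | T ω = m}.indicator (fun _ => (1 : ℝ)) ω) * Z k ω ≤ g ω := by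
      filter_upwards [hZbdd] with ω hω
      obtain ⟨hZ0, hZM⟩ := hω k
      by_cases hωA : ω ∈ A
      · rw [Set.indicator_of_mem hωA]
        by_cases hZτ : Z k ω ≤ τ / 2
        · have h2 : (0:ℝ) ≤ M * B.indicator (fun _ => (1:ℝ)) ω := by
            apply mul_nonneg hM.le
            exact Set.indicator_nonneg (fun _ _ => zero_le_one) ω
          simp only [g, Set.indicator_of_mem hωA, mul_one]
          linarith
        · push_neg at hZτ
          have hωS : ω ∈ S k := hZS k hZτ
          have hωB : ω ∈ B := ⟨hωS, hωA⟩
          simp only [g, Set.indicator_of_mem hωA, Set.indicator_of_mem hωB, mul_one]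
          linarith
      · rw [Set.indicator_of_notMem hωA]
        have h1 : (0:ℝ) ≤ (τ/2) * A.indicator (fun _ => (1:ℝ)) ω :=
          mul_nonneg (by linarith) (Set.indicator_nonneg (fun _ _ => zero_le_one) ω)
        have h2 : (0:ℝ) ≤ M * B.indicator (fun _ => (1:ℝ)) ω :=
          mul_nonneg hM.le (Set.indicator_nonneg (fun _ _ => zero_le_one) ω)
        simp only [g, zero_mul]
        linarith
    have hnn : 0 ≤ᵐ[μ] fun ω => ({ω | T ω = m}.indicator (fun _ => (1 : ℝ)) ω) * Z k ω := by
      filter_upwards [hZbdd] with ω hω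
      exact mul_nonneg (Set.indicator_nonneg (fun _ _ => zero_le_one) ω) (hω k).1
    have h1 : ∫ ω, ({ω | T ω = m}.indicator (fun _ => (1 : ℝ)) ω) * Z k ω ∂μ
        ≤ ∫ ω, g ω ∂μ := integral_mono_of_nonneg hnn hgint hbound
    have hgval : ∫ ω, g ω ∂μ = (τ/2) * (μ A).toReal + M * (μ B).toReal := by
      rw [hg]
      rw [integral_add
        (((integrable_indicator_iff hAmeas).2
          (integrableOn_const (measure_ne_top μ A))).const_mul _)
        (((integrable_indicator_iff hBmeas).2
          (integrableOn_const (measure_ne_top μ B))).const_mul _),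
        integral_const_mul, integral_const_mul,
        integral_indicator_const (1:ℝ) hAmeas, integral_indicator_const (1:ℝ) hBmeas,
        smul_eq_mul, smul_eq_mul, mul_one, mul_one]
      rfl
    have hBval : (μ B).toReal ≤ ρ * (μ A).toReal := by
      have := hindep k m
      rw [hB, this, ENNReal.toReal_mul]
      apply mul_le_mul_of_nonneg_right _ ENNReal.toReal_nonneg
      have hle : μ (S k) ≤ ENNReal.ofReal ρ := (hS k).le
      calc (μ (S k)).toReal ≤ (ENNReal.ofReal ρ).toReal :=
            ENNReal.toReal_mono ENNReal.ofReal_ne_top hle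
        _ = ρ := ENNReal.toReal_ofReal hρ.le
    calc ∫ ω, ({ω | T ω = m}.indicator (fun _ => (1 : ℝ)) ω) * Z k ω ∂μ
        ≤ (τ/2) * (μ A).toReal + M * (μ B).toReal := by rw [← hgval]; exact h1
      _ ≤ (τ/2) * (μ A).toReal + M * (ρ * (μ A).toReal) := by
          have := mul_le_mul_of_nonneg_left hBval hM.le
          linarith
      _ = (τ / 2 + M * ρ) * (μ A).toReal := by ring
  -- sum the bounds
  have hsum : ∑ k ∈ Finset.range (t + 1), (μ {ω | T ω = t - k}).toReal
      = (μ {ω | T ω ≤ t}).toReal := by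
    have hre : ∑ k ∈ Finset.range (t + 1), (μ {ω | T ω = t - k}).toReal
        = ∑ j ∈ Finset.range (t + 1), (μ {ω | T ω = j}).toReal := by
      have := Finset.sum_range_reflect (fun j => (μ {ω | T ω = j}).toReal) (t + 1)
      simpa using this
    rw [hre]
    have hU : {ω | T ω ≤ t} = ⋃ j ∈ Finset.range (t + 1), {ω | T ω = j} := by
      ext ω
      simp only [Set.mem_setOf_eq, Set.mem_iUnion, Finset.mem_range, Nat.lt_succ_iff]
      exact ⟨fun h => ⟨T ω, h, rfl⟩, fun ⟨j, hj, hje⟩ => hje ▸ hj⟩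
    rw [hU, measure_biUnion_finset ?_ (fun j _ => hTm j)]
    · rw [ENNReal.toReal_sum (fun j _ => measure_ne_top μ _)]
    · intro i _ j _ hij
      simp only [Function.onFun, Set.disjoint_left]
      intro ω hi hj
      exact hij (hi.symm.trans hj)
  calc ∑ k ∈ Finset.range (t + 1),
        ∫ ω, ({ω | T ω = t - k}.indicator (fun _ => (1 : ℝ)) ω) * Z k ω ∂μ
      ≤ ∑ k ∈ Finset.range (t + 1), (τ / 2 + M * ρ) * (μ {ω | T ω = t - k}).toReal :=
        Finset.sum_le_sum (fun k _ => key k (t - k))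
    _ = (τ / 2 + M * ρ) * ∑ k ∈ Finset.range (t + 1), (μ {ω | T ω = t - k}).toReal := by
        rw [Finset.mul_sum]
    _ = (τ / 2 + M * ρ) * (μ {ω | T ω ≤ t}).toReal := by rw [hsum]
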